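/- Let A/B and S/T be Farey neighbors with 0 ≤ A/B < S/T ≤ 1, let P/Q = (A+S)/(B+T) be their mediant, let n ≥ 1, and set S_n/T_n = ((n−1)P+S)/((n−1)Q+T). For m ≥ 1 let P_m/Q_m = (P + m·S_n)/(Q + m·T_n) (a reduced fraction with P/Q < P_m/Q_m < S_n/T_n). Then the 01-digit sequence of the broken line BL(P/Q, P_m/Q_m, n) is the purely periodic sequence whose period word is the block B_{n,m} = (W^{01}_{P/Q})^n · (W^{01}_{S/T} · (W^{01}_{P/Q})^{n−1})^{m−1} · W^{01}_{S/T}. -/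

import Mathlib

/-- The 01-mechanical digit sequence of `r`: `α_j(r) = ⌈(j+1)r⌉ - ⌈jr⌉`. -/
noncomputable def alpha01 (r : ℚ) (j : ℕ) : ℤ := ⌈((j : ℚ) + 1) * r⌉ - ⌈(j : ℚ) * r⌉

/-- The 10-mechanical digit sequence of `r`: `β_j(r) = ⌊(j+1)r⌋ - ⌊jr⌋`. -/
noncomputable def beta10 (r : ℚ) (j : ℕ) : ℤ := ⌊((j : ℚ) + 1) * r⌋ - ⌊(j : ℚ) * r⌋

/-- The 01-word of `r` of length `q`: `(α_1(r), …, α_q(r))`. -/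
noncomputable def word01 (r : ℚ) (q : ℕ) : List ℤ := (List.range q).map fun i => alpha01 r (i + 1)

/-- The 10-word of `r` of length `q`: `(β_1(r), …, β_q(r))`. -/
noncomputable def word10 (r : ℚ) (q : ℕ) : List ℤ := (List.range q).map fun i => beta10 r (i + 1)

/-- The broken line with slopes `r` (before) and `s` (after) and hinge abscissa `h`. -/
noncomputable def BLfun (r s : ℚ) (h : ℕ) (x : ℚ) : ℚ :=
  if x ≤ (h : ℚ) then r * x else s * (x - h) + r * h

/-- The 01-digit sequence of the broken line: `γ_j = ⌈f(j+1)⌉ - ⌈f(j)⌉`. -/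
noncomputable def gammaBL (r s : ℚ) (h : ℕ) (j : ℕ) : ℤ :=
  ⌈BLfun r s h ((j : ℚ) + 1)⌉ - ⌈BLfun r s h (j : ℚ)⌉

/-- The 10-digit sequence of the broken line: `δ_j = ⌊f(j+1)⌋ - ⌊f(j)⌋`. -/
noncomputable def deltaBL (r s : ℚ) (h : ℕ) (j : ℕ) : ℤ :=
  ⌊BLfun r s h ((j : ℚ) + 1)⌋ - ⌊BLfun r s h (j : ℚ)⌋

/-- The angle `θ_{01}` of the broken line, `Σ_{j≥1} γ_j 2^{-j}`. -/
noncomputable def theta01BL (r s : ℚ) (h : ℕ) : ℝ :=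
  ∑' j : ℕ, (gammaBL r s h (j + 1) : ℝ) / 2 ^ (j + 1)

/-- The angle `θ_{10}` of the broken line, `Σ_{j≥1} δ_j 2^{-j}`. -/
noncomputable def theta10BL (r s : ℚ) (h : ℕ) : ℝ :=
  ∑' j : ℕ, (deltaBL r s h (j + 1) : ℝ) / 2 ^ (j + 1)

/-- `n`-fold concatenation of a word with itself. -/
def wpow (w : List ℤ) (n : ℕ) : List ℤ := (List.replicate n w).flatten

/-- The block `B_{n,m}`: `B_{n,0} = W_{P/Q}` and, for `m ≥ 1`,
`B_{n,m} = W_{P/Q}^n (W_{S/T} W_{P/Q}^{n-1})^{m-1} W_{S/T}`. -/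
def Blk (wP wS : List ℤ) (n m : ℕ) : List ℤ :=
  if m = 0 then wP else wpow wP n ++ wpow (wS ++ wpow wP (n - 1)) (m - 1) ++ wS

set_option maxHeartbeats 1600000
set_option linter.unusedSectionVars false

/- ## auxiliary machinery -/

noncomputable def ceilq (a b : ℤ) : ℤ := ⌈(a:ℚ)/(b:ℚ)⌉

lemma ceilq_eq_iff (a b c : ℤ) (hb : 0 < b) : ceilq a b = c ↔ b*(c-1) < a ∧ a ≤ b*c := by
  unfold ceilq
  have hb' : (0:ℚ) < (b:ℚ) := by exact_mod_cast hb
  rw [Int.ceil_eq_iff, div_le_iff₀ hb', lt_div_iff₀ hb']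
  constructor
  · rintro ⟨h1, h2⟩
    constructor
    · have : ((b*(c-1) : ℤ) : ℚ) < ((a:ℤ):ℚ) := by push_cast; nlinarith
      exact_mod_cast this
    · have : ((a:ℤ):ℚ) ≤ ((b*c : ℤ) : ℚ) := by push_cast; nlinarith
      exact_mod_cast this
  · rintro ⟨h1, h2⟩
    have h1' : ((b*(c-1) : ℤ) : ℚ) < ((a:ℤ):ℚ) := by exact_mod_cast h1
    have h2' : ((a:ℤ):ℚ) ≤ ((b*c : ℤ) : ℚ) := by exact_mod_cast h2
    push_cast at h1' h2'
    constructor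
    · nlinarith
    · nlinarith

lemma ceilq_char (a b : ℤ) (hb : 0 < b) : b*(ceilq a b - 1) < a ∧ a ≤ b*(ceilq a b) :=
  (ceilq_eq_iff a b _ hb).mp rfl

lemma ceilq_add_mul (a k b : ℤ) (hb : 0 < b) : ceilq (a + k*b) b = ceilq a b + k := by
  rw [ceilq_eq_iff _ _ _ hb]
  obtain ⟨h1, h2⟩ := ceilq_char a b hb
  constructor <;> nlinarith

lemma master (N v u C c θ Qm : ℤ) (hv : 0 < v) (hQm : 0 < Qm)
    (hlin : v*N = (C*v + u)*Qm - θ) (hθ0 : 0 ≤ θ) (hc2 : u ≤ v*c)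
    (hθ : θ < Qm*(v - v*c + u)) : ceilq N Qm = C + c := by
  rw [ceilq_eq_iff _ _ _ hQm]
  constructor
  · nlinarith
  · nlinarith

section Key
variable (p q s t sn tn pm qm n m : ℤ)
  (hq : 0 < q) (ht : 0 < t) (htq : t < q)
  (hn : 1 ≤ n) (hm : 1 ≤ m)
  (bez1 : s*q - p*t = 1)
  (dsn : sn = (n-1)*p + s) (dtn : tn = (n-1)*q + t)
  (dpm : pm = p + m*sn) (dqm : qm = q + m*tn)

include hq ht htq hn hm bez1 dsn dtn dpm dqm

lemma qm_pos : 0 < qm := by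
  have h1 : 0 ≤ (n-1)*q := mul_nonneg (by linarith) hq.le
  have h2 : 0 ≤ m*((n-1)*q + t) := mul_nonneg (by linarith) (by linarith)
  subst dqm dtn; linarith

lemma bez3 : q*pm = p*qm + m := by subst dpm dqm dsn dtn; linear_combination m*bez1

lemma bez4 : tn*pm = sn*qm - 1 := by
  subst dpm dqm dsn dtn; linear_combination -bez1

lemma bez5 : t*pm = s*qm - (1 + m*(n-1)) := by
  subst dpm dqm dsn dtn; linear_combination (-(1+m*(n-1)))*bez1

lemma keyL1 (k : ℤ) (hk0 : 0 ≤ k) (hk1 : k ≤ n*q) :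
    ceilq (k*pm - n*m) qm = ceilq (k*p) q := by
  have hqm := qm_pos p q s t sn tn pm qm n m hq ht htq hn hm bez1 dsn dtn dpm dqm
  have hb3 := bez3 p q s t sn tn pm qm n m hq ht htq hn hm bez1 dsn dtn dpm dqm
  obtain ⟨hc1, hc2⟩ := ceilq_char (k*p) q hq
  set c := ceilq (k*p) q with hc
  set r0 : ℤ := q*c - k*p with hr0
  have hr00 : 0 ≤ r0 := by simp [hr0]; linarith
  have hr01 : r0 ≤ q - 1 := by simp [hr0]; nlinarith
  set e : ℤ := c*t - k*s with he
  have hk : k = r0*t - q*e := by simp [hr0, he]; linear_combination (-k)*bez1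
  have het : e ≤ t - 1 := by
    have h1 : q*e < q*t := by nlinarith
    have := lt_of_mul_lt_mul_left h1 (le_of_lt hq)
    linarith
  have hG : 1 ≤ (q - r0)*(1 + m*(n-1)) + m*t - m*n - m*e := by
    have h1 : 0 ≤ (q-r0-1)*(1+m*(n-1)) := by
      apply mul_nonneg (by linarith)
      have : 0 ≤ m*(n-1) := mul_nonneg (by linarith) (by linarith)
      linarith
    have h2 : 0 ≤ m*(t-1-e) := mul_nonneg (by linarith) (by linarith)
    nlinarith
  have key : ceilq (k*pm - n*m) qm = 0 + c := by
    apply master _ q (k*p) 0 c (m*(n*q - k)) qm hq hqm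
    · linear_combination k*hb3
    · nlinarith
    · linarith
    · have hexp : qm*(q - q*c + k*p) - m*(n*q - k)
          = q*((q - r0)*(1 + m*(n-1)) + m*t - m*n - m*e) := by
        rw [show q - q*c + k*p = q - r0 from by rw [hr0]; ring]
        subst dqm dtn
        linear_combination m*hk
      nlinarith [mul_le_mul_of_nonneg_left hG hq.le]
  simpa using key

lemma keyL2 (a t' : ℤ) (ha0 : 0 ≤ a) (ha1 : a ≤ m-1) (ht'0 : 0 ≤ t') (ht'1 : t' ≤ t) :
    ceilq ((n*q + a*tn + t')*pm - n*m) qm = n*p + a*sn + ceilq (t'*s) t := by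
  have hqm := qm_pos p q s t sn tn pm qm n m hq ht htq hn hm bez1 dsn dtn dpm dqm
  have hb3 := bez3 p q s t sn tn pm qm n m hq ht htq hn hm bez1 dsn dtn dpm dqm
  have hb4 := bez4 p q s t sn tn pm qm n m hq ht htq hn hm bez1 dsn dtn dpm dqm
  have hb5 := bez5 p q s t sn tn pm qm n m hq ht htq hn hm bez1 dsn dtn dpm dqm
  obtain ⟨hc1, hc2⟩ := ceilq_char (t'*s) t ht
  set c := ceilq (t'*s) t with hc
  have hM : 0 ≤ m*(n-1) := mul_nonneg (by linarith) (by linarith)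
  have key : ceilq ((n*q + a*tn + t')*pm - n*m) qm = (n*p + a*sn) + c := by
    apply master _ t (t'*s) (n*p + a*sn) c (t'*(1+m*(n-1)) + a*t) qm ht hqm
    · linear_combination (n*t)*hb3 + (a*t)*hb4 + t'*hb5
    · have h1 : 0 ≤ t'*(1+m*(n-1)) := mul_nonneg ht'0 (by linarith)
      have h2 : 0 ≤ a*t := mul_nonneg ha0 ht.le
      linarith
    · linarith
    · have hr1 : 1 ≤ t - t*c + t'*s := by linarith
      have hbd : t'*(1+m*(n-1)) + a*t ≤ t*(1+m*(n-1)) + (m-1)*t := by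
        have := mul_le_mul_of_nonneg_right ht'1 (show (0:ℤ) ≤ 1+m*(n-1) by linarith)
        have := mul_le_mul_of_nonneg_right ha1 ht.le
        linarith
      have hqmbig : t*(1+m*(n-1)) + (m-1)*t < qm := by
        have h3 : 0 ≤ m*(n-1)*(q-t) := mul_nonneg hM (by linarith)
        subst dqm dtn; nlinarith
      have := mul_le_mul_of_nonneg_left hr1 hqm.le
      nlinarith
  linarith [key]

lemma keyL3 (a c0 : ℤ) (ha0 : 0 ≤ a) (ha1 : a ≤ m-2) (hc00 : 0 ≤ c0) (hc01 : c0 ≤ (n-1)*q) :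
    ceilq ((n*q + a*tn + t + c0)*pm - n*m) qm = n*p + a*sn + s + ceilq (c0*p) q := by
  have hqm := qm_pos p q s t sn tn pm qm n m hq ht htq hn hm bez1 dsn dtn dpm dqm
  have hb3 := bez3 p q s t sn tn pm qm n m hq ht htq hn hm bez1 dsn dtn dpm dqm
  have hb4 := bez4 p q s t sn tn pm qm n m hq ht htq hn hm bez1 dsn dtn dpm dqm
  have hb5 := bez5 p q s t sn tn pm qm n m hq ht htq hn hm bez1 dsn dtn dpm dqm
  obtain ⟨hc1, hc2⟩ := ceilq_char (c0*p) q hq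
  set c := ceilq (c0*p) q with hc
  set r0 : ℤ := q*c - c0*p with hr0
  have hr00 : 0 ≤ r0 := by simp [hr0]; linarith
  have hr01 : r0 ≤ q - 1 := by simp [hr0]; nlinarith
  set e : ℤ := c*t - c0*s with he
  have hk : c0 = r0*t - q*e := by simp [hr0, he]; linear_combination (-c0)*bez1
  have het : e ≤ t - 1 := by
    have h1 : q*e < q*t := by nlinarith
    have := lt_of_mul_lt_mul_left h1 (le_of_lt hq)
    linarith
  have hM : 0 ≤ m*(n-1) := mul_nonneg (by linarith) (by linarith)
  have key : ceilq ((n*q + a*tn + t + c0)*pm - n*m) qm = (n*p + a*sn + s) + c := by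
    apply master _ q (c0*p) (n*p + a*sn + s) c ((a + 1 + m*(n-1))*q - c0*m) qm hq hqm
    · linear_combination (n*q)*hb3 + (a*q)*hb4 + q*hb5 + c0*hb3
    · have h1 : c0*m ≤ ((n-1)*q)*m := mul_le_mul_of_nonneg_right hc01 (by linarith)
      have h2 : ((n-1)*q)*m ≤ (a + 1 + m*(n-1))*q := by nlinarith
      linarith
    · linarith
    · have hG : 1 ≤ (q - r0)*(1 + m*(n-1)) + m*t - (a+1) - m*(n-1) - m*e := by
        have h1 : 0 ≤ (q-r0-1)*(1+m*(n-1)) := mul_nonneg (by linarith) (by linarith)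
        have h2 : 0 ≤ m*(t-1-e) := mul_nonneg (by linarith) (by linarith)
        nlinarith
      have hexp : qm*(q - q*c + c0*p) - ((a + 1 + m*(n-1))*q - c0*m)
          = q*((q - r0)*(1 + m*(n-1)) + m*t - (a+1) - m*(n-1) - m*e) := by
        rw [show q - q*c + c0*p = q - r0 from by rw [hr0]; ring]
        subst dqm dtn
        linear_combination m*hk
      nlinarith [mul_le_mul_of_nonneg_left hG hq.le]
  linarith [key]

end Key

/- list lemmas -/

lemma word01_length (r : ℚ) (q : ℕ) : (word01 r q).length = q := by simp [word01]

lemma word01_getD (r : ℚ) (q i : ℕ) (hi : i < q) : (word01 r q).getD i 0 = alpha01 r (i+1) := by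
  simp [word01, List.getD, hi]

lemma wpow_succ (w : List ℤ) (n : ℕ) : wpow w (n+1) = w ++ wpow w n := by
  simp [wpow, List.replicate_succ]

lemma wpow_length (w : List ℤ) (n : ℕ) : (wpow w n).length = n * w.length := by
  induction n with
  | zero => simp [wpow]
  | succ k ih => rw [wpow_succ]; simp [ih]; ring

lemma getD_append_left (w v : List ℤ) (i : ℕ) (hi : i < w.length) :
    (w ++ v).getD i 0 = w.getD i 0 := by
  simp [List.getD, List.getElem?_append, hi]

lemma getD_append_right (w v : List ℤ) (i : ℕ) (hi : w.length ≤ i) :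
    (w ++ v).getD i 0 = v.getD (i - w.length) 0 := by
  simp [List.getD, List.getElem?_append, Nat.not_lt.mpr hi]

lemma wpow_getD (w : List ℤ) (n i : ℕ) (hi : i < n * w.length) :
    (wpow w n).getD i 0 = w.getD (i % w.length) 0 := by
  induction n generalizing i with
  | zero => simp at hi
  | succ k ih =>
    rw [wpow_succ]
    rcases lt_or_ge i w.length with h | h
    · rw [getD_append_left _ _ _ h, Nat.mod_eq_of_lt h]
    · have hw : 0 < w.length := by
        rcases Nat.eq_zero_or_pos w.length with h0 | h0
        · simp [h0] at hi
        · exact h0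
      rw [getD_append_right _ _ _ h]
      have hi' : i - w.length < k * w.length := by
        have : (k+1) * w.length = k * w.length + w.length := by ring
        omega
      rw [ih _ hi', ← Nat.mod_eq_sub_mod h]

lemma alpha01_ceilq (u v j : ℕ) :
    alpha01 ((u:ℚ)/(v:ℚ)) j = ceilq (((j:ℤ)+1)*u) v - ceilq ((j:ℤ)*u) v := by
  unfold alpha01 ceilq
  rw [show ((j:ℚ)+1)*((u:ℚ)/(v:ℚ)) = (((((j:ℤ)+1)*u : ℤ)):ℚ)/(((v:ℕ):ℤ):ℚ) by push_cast; ring,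
      show (j:ℚ)*((u:ℚ)/(v:ℚ)) = ((((j:ℤ)*u : ℤ)):ℚ)/(((v:ℕ):ℤ):ℚ) by push_cast; ring]

lemma ceilq_zero (v : ℤ) (hv : 0 < v) : ceilq 0 v = 0 := by
  rw [ceilq_eq_iff _ _ _ hv]; constructor <;> nlinarith

lemma ceilq_one (u v : ℤ) (hv : 0 < v) (h1 : 1 ≤ u) (h2 : u ≤ v) : ceilq u v = 1 := by
  rw [ceilq_eq_iff _ _ _ hv]; constructor <;> nlinarith

lemma one_le_mul_int (a b : ℤ) (ha : 1 ≤ a) (hb : 1 ≤ b) : 1 ≤ a*b := by nlinarith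

lemma ceilq_mul_self (u v : ℤ) (hv : 0 < v) : ceilq (v*u) v = u := by
  rw [show v*u = 0 + u*v from by ring, ceilq_add_mul _ _ _ hv, ceilq_zero _ hv]; ring

/-- with `A/B < S/T` Farey neighbors, `P/Q` their mediant, `n ≥ 1`,
`S_n/T_n = ((n-1)P+S)/((n-1)Q+T)` and `P_m/Q_m = (P+mS_n)/(Q+mT_n)` for `m ≥ 1`,
the 01-digit sequence of `BL(P/Q, P_m/Q_m, n)` is purely periodic with period word
`B_{n,m} = (W^{01}_{P/Q})^n ((W^{01}_{S/T})(W^{01}_{P/Q})^{n-1})^{m-1} W^{01}_{S/T}`. -/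
theorem broken_line_PmQm_block
    (A B S T P Q Sn Tn n m Pm Qm : ℕ)
    (hB : 0 < B) (hT : 0 < T) (hST1 : S ≤ T)
    (hFarey : B * S = A * T + 1)
    (hn : 1 ≤ n) (hm : 1 ≤ m)
    (hP : P = A + S) (hQ : Q = B + T)
    (hSn : Sn = (n - 1) * P + S) (hTn : Tn = (n - 1) * Q + T)
    (hPm : Pm = P + m * Sn) (hQm : Qm = Q + m * Tn) :
    ∀ j : ℕ, 1 ≤ j →
      gammaBL ((P : ℚ) / Q) ((Pm : ℚ) / Qm) (n * Q) j =
        (Blk (word01 ((P : ℚ) / Q) Q) (word01 ((S : ℚ) / T) T) n m).getD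
          ((j - 1) % (Blk (word01 ((P : ℚ) / Q) Q) (word01 ((S : ℚ) / T) T) n m).length) 0 := by
  obtain ⟨n', rfl⟩ : ∃ n', n = n'+1 := ⟨n-1, by omega⟩
  obtain ⟨m', rfl⟩ : ∃ m', m = m'+1 := ⟨m-1, by omega⟩
  simp only [Nat.add_sub_cancel] at hSn hTn
  have hS1 : 1 ≤ S := by
    rcases Nat.eq_zero_or_pos S with h | h
    · rw [h, Nat.mul_zero] at hFarey; omega
    · exact h
  have hAB : A < B := by
    have h1 : A*T < B*T := by
      calc A*T < A*T+1 := Nat.lt_succ_self _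
        _ = B*S := hFarey.symm
        _ ≤ B*T := Nat.mul_le_mul_left B hST1
    exact Nat.lt_of_mul_lt_mul_right h1
  have hP1 : 1 ≤ P := by omega
  have hQ0 : 0 < Q := by omega
  have hPQ : P < Q := by omega
  have hTQ : T < Q := by omega
  have zq : (0:ℤ) < (Q:ℤ) := by exact_mod_cast hQ0
  have zt : (0:ℤ) < (T:ℤ) := by exact_mod_cast hT
  have ztq : (T:ℤ) < (Q:ℤ) := by exact_mod_cast hTQ
  have zp1 : (1:ℤ) ≤ (P:ℤ) := by exact_mod_cast hP1
  have zpq : (P:ℤ) < (Q:ℤ) := by exact_mod_cast hPQ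
  have zs1 : (1:ℤ) ≤ (S:ℤ) := by exact_mod_cast hS1
  have zst : (S:ℤ) ≤ (T:ℤ) := by exact_mod_cast hST1
  have zn : (1:ℤ) ≤ ((n'+1 : ℕ):ℤ) := by exact_mod_cast hn
  have zm : (1:ℤ) ≤ ((m'+1 : ℕ):ℤ) := by exact_mod_cast hm
  have bez1 : (S:ℤ)*(Q:ℤ) - (P:ℤ)*(T:ℤ) = 1 := by
    have h : (B:ℤ)*(S:ℤ) = (A:ℤ)*(T:ℤ) + 1 := by exact_mod_cast hFarey
    have hp' : (P:ℤ) = (A:ℤ) + (S:ℤ) := by exact_mod_cast hP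
    have hq' : (Q:ℤ) = (B:ℤ) + (T:ℤ) := by exact_mod_cast hQ
    rw [hp', hq']; linear_combination h
  have dsn : (Sn:ℤ) = (((n'+1 : ℕ):ℤ)-1)*(P:ℤ) + (S:ℤ) := by
    have h : (Sn:ℤ) = ((n' : ℕ):ℤ)*(P:ℤ) + (S:ℤ) := by exact_mod_cast hSn
    rw [h]; push_cast; ring
  have dtn : (Tn:ℤ) = (((n'+1 : ℕ):ℤ)-1)*(Q:ℤ) + (T:ℤ) := by
    have h : (Tn:ℤ) = ((n' : ℕ):ℤ)*(Q:ℤ) + (T:ℤ) := by exact_mod_cast hTn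
    rw [h]; push_cast; ring
  have dpm : (Pm:ℤ) = (P:ℤ) + ((m'+1 : ℕ):ℤ)*(Sn:ℤ) := by exact_mod_cast hPm
  have dqm : (Qm:ℤ) = (Q:ℤ) + ((m'+1 : ℕ):ℤ)*(Tn:ℤ) := by exact_mod_cast hQm
  have zqm : (0:ℤ) < (Qm:ℤ) :=
    qm_pos (P:ℤ) (Q:ℤ) (S:ℤ) (T:ℤ) (Sn:ℤ) (Tn:ℤ) (Pm:ℤ) (Qm:ℤ) _ _ zq zt ztq zn zm bez1 dsn dtn dpm dqm
  have hQmpos : 0 < Qm := by exact_mod_cast zqm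
  have zb3 : (Q:ℤ)*(Pm:ℤ) = (P:ℤ)*(Qm:ℤ) + ((m'+1:ℕ):ℤ) :=
    bez3 (P:ℤ) (Q:ℤ) (S:ℤ) (T:ℤ) (Sn:ℤ) (Tn:ℤ) (Pm:ℤ) (Qm:ℤ) _ _ zq zt ztq zn zm bez1 dsn dtn dpm dqm
  have K1 : ∀ k : ℤ, 0 ≤ k → k ≤ ((n'+1:ℕ):ℤ)*(Q:ℤ) →
      ceilq (k*(Pm:ℤ) - ((n'+1:ℕ):ℤ)*((m'+1:ℕ):ℤ)) (Qm:ℤ) = ceilq (k*(P:ℤ)) (Q:ℤ) :=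
    fun k h1 h2 => keyL1 (P:ℤ) (Q:ℤ) (S:ℤ) (T:ℤ) (Sn:ℤ) (Tn:ℤ) (Pm:ℤ) (Qm:ℤ) _ _
      zq zt ztq zn zm bez1 dsn dtn dpm dqm k h1 h2
  have K2 : ∀ a t' : ℤ, 0 ≤ a → a ≤ ((m'+1:ℕ):ℤ)-1 → 0 ≤ t' → t' ≤ (T:ℤ) →
      ceilq ((((n'+1:ℕ):ℤ)*(Q:ℤ) + a*(Tn:ℤ) + t')*(Pm:ℤ) - ((n'+1:ℕ):ℤ)*((m'+1:ℕ):ℤ)) (Qm:ℤ)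
        = ((n'+1:ℕ):ℤ)*(P:ℤ) + a*(Sn:ℤ) + ceilq (t'*(S:ℤ)) (T:ℤ) :=
    fun a t' h1 h2 h3 h4 => keyL2 (P:ℤ) (Q:ℤ) (S:ℤ) (T:ℤ) (Sn:ℤ) (Tn:ℤ) (Pm:ℤ) (Qm:ℤ) _ _
      zq zt ztq zn zm bez1 dsn dtn dpm dqm a t' h1 h2 h3 h4
  have K3 : ∀ a c0 : ℤ, 0 ≤ a → a ≤ ((m'+1:ℕ):ℤ)-2 → 0 ≤ c0 → c0 ≤ (((n'+1:ℕ):ℤ)-1)*(Q:ℤ) →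
      ceilq ((((n'+1:ℕ):ℤ)*(Q:ℤ) + a*(Tn:ℤ) + (T:ℤ) + c0)*(Pm:ℤ) - ((n'+1:ℕ):ℤ)*((m'+1:ℕ):ℤ)) (Qm:ℤ)
        = ((n'+1:ℕ):ℤ)*(P:ℤ) + a*(Sn:ℤ) + (S:ℤ) + ceilq (c0*(P:ℤ)) (Q:ℤ) :=
    fun a c0 h1 h2 h3 h4 => keyL3 (P:ℤ) (Q:ℤ) (S:ℤ) (T:ℤ) (Sn:ℤ) (Tn:ℤ) (Pm:ℤ) (Qm:ℤ) _ _
      zq zt ztq zn zm bez1 dsn dtn dpm dqm a c0 h1 h2 h3 h4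
  have Hper : ∀ x : ℤ, ceilq ((x+(Qm:ℤ))*(Pm:ℤ) - ((n'+1:ℕ):ℤ)*((m'+1:ℕ):ℤ)) (Qm:ℤ)
      = ceilq (x*(Pm:ℤ) - ((n'+1:ℕ):ℤ)*((m'+1:ℕ):ℤ)) (Qm:ℤ) + (Pm:ℤ) := by
    intro x
    rw [show (x+(Qm:ℤ))*(Pm:ℤ) - ((n'+1:ℕ):ℤ)*((m'+1:ℕ):ℤ)
        = (x*(Pm:ℤ) - ((n'+1:ℕ):ℤ)*((m'+1:ℕ):ℤ)) + (Pm:ℤ)*(Qm:ℤ) from by ring]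
    exact ceilq_add_mul _ _ _ zqm
  have ceilq0Q : ceilq 0 (Q:ℤ) = 0 := ceilq_zero _ zq
  have ceilq0T : ceilq 0 (T:ℤ) = 0 := ceilq_zero _ zt
  have ceilqPQ : ceilq (P:ℤ) (Q:ℤ) = 1 := ceilq_one _ _ zq zp1 (le_of_lt zpq)
  have ceilqST : ceilq (S:ℤ) (T:ℤ) = 1 := ceilq_one _ _ zt zs1 zst
  have rTS : ceilq ((T:ℤ)*(S:ℤ)) (T:ℤ) = (S:ℤ) := by
    rw [show (T:ℤ)*(S:ℤ) = 0 + (S:ℤ)*(T:ℤ) from by ring, ceilq_add_mul _ _ _ zt, ceilq0T]; ring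
  -- ceiling of the broken line
  have hceil : ∀ k : ℕ, ⌈BLfun ((P:ℚ)/(Q:ℚ)) ((Pm:ℚ)/(Qm:ℚ)) ((n'+1)*Q) (k:ℚ)⌉
      = ceilq ((k:ℤ)*(Pm:ℤ) - ((n'+1:ℕ):ℤ)*((m'+1:ℕ):ℤ)) (Qm:ℤ) := by
    intro k
    unfold BLfun
    by_cases hk : (k:ℚ) ≤ (((n'+1)*Q : ℕ):ℚ)
    · rw [if_pos hk]
      have hk' : (k:ℤ) ≤ ((n'+1:ℕ):ℤ)*(Q:ℤ) := by
        have : (k:ℕ) ≤ (n'+1)*Q := by exact_mod_cast hk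
        push_cast
        exact_mod_cast this
      rw [K1 (k:ℤ) (by positivity) hk']
      unfold ceilq
      congr 1
      push_cast
      ring
    · rw [if_neg hk]
      have hQne : ((Q:ℕ):ℚ) ≠ 0 := by exact_mod_cast hQ0.ne'
      have hQmne : ((Qm:ℕ):ℚ) ≠ 0 := by exact_mod_cast hQmpos.ne'
      have zb3Q : ((Q:ℕ):ℚ)*((Pm:ℕ):ℚ) = ((P:ℕ):ℚ)*((Qm:ℕ):ℚ) + ((m':ℚ)+1) := by
        exact_mod_cast zb3
      have harg : ((Pm:ℚ)/(Qm:ℚ))*((k:ℚ) - (((n'+1)*Q : ℕ):ℚ)) + ((P:ℚ)/(Q:ℚ))*(((n'+1)*Q : ℕ):ℚ)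
          = ((((k:ℤ)*(Pm:ℤ) - ((n'+1:ℕ):ℤ)*((m'+1:ℕ):ℤ) : ℤ)):ℚ)/(((Qm:ℕ):ℤ):ℚ) := by
        push_cast
        field_simp
        linear_combination (-((n':ℚ)+1))*zb3Q
      rw [harg]
      rfl
  have hgam : ∀ k : ℕ, gammaBL ((P:ℚ)/(Q:ℚ)) ((Pm:ℚ)/(Qm:ℚ)) ((n'+1)*Q) k
      = ceilq (((k:ℤ)+1)*(Pm:ℤ) - ((n'+1:ℕ):ℤ)*((m'+1:ℕ):ℤ)) (Qm:ℤ)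
        - ceilq ((k:ℤ)*(Pm:ℤ) - ((n'+1:ℕ):ℤ)*((m'+1:ℕ):ℤ)) (Qm:ℤ) := by
    intro k
    unfold gammaBL
    rw [show ((k:ℚ)+1) = ((k+1:ℕ):ℚ) from by push_cast; ring, hceil (k+1), hceil k]
    push_cast
    ring
  -- the block
  set blk := Blk (word01 ((P:ℚ)/(Q:ℚ)) Q) (word01 ((S:ℚ)/(T:ℚ)) T) (n'+1) (m'+1) with hblkdef
  have hblk2 : blk = wpow (word01 ((P:ℚ)/(Q:ℚ)) Q) (n'+1) ++ wpow ((word01 ((S:ℚ)/(T:ℚ)) T) ++ wpow (word01 ((P:ℚ)/(Q:ℚ)) Q) n') m' ++ (word01 ((S:ℚ)/(T:ℚ)) T) := by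
    rw [hblkdef]; unfold Blk; norm_num
  have lwp : (word01 ((P:ℚ)/(Q:ℚ)) Q).length = Q := word01_length _ _
  have lws : (word01 ((S:ℚ)/(T:ℚ)) T).length = T := word01_length _ _
  have lW1 : (wpow (word01 ((P:ℚ)/(Q:ℚ)) Q) (n'+1)).length = (n'+1)*Q := by rw [wpow_length, lwp]
  have lch : ((word01 ((S:ℚ)/(T:ℚ)) T) ++ wpow (word01 ((P:ℚ)/(Q:ℚ)) Q) n').length = Tn := by
    rw [List.length_append, lws, wpow_length, lwp, hTn]; ring
  have lW2 : (wpow ((word01 ((S:ℚ)/(T:ℚ)) T) ++ wpow (word01 ((P:ℚ)/(Q:ℚ)) Q) n') m').length = m'*Tn := by rw [wpow_length, lch]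
  have hQm' : Qm = (n'+1)*Q + m'*Tn + T := by rw [hQm, hTn]; ring
  have hlen : blk.length = Qm := by
    rw [hblk2, List.length_append, List.length_append, lW1, lW2, lws, hQm']
  have hTn0 : 0 < Tn := by
    rw [hTn]; exact Nat.lt_of_lt_of_le hT (Nat.le_add_left _ _)
  have zNQ : ((((n'+1)*Q : ℕ)):ℤ) = ((n'+1:ℕ):ℤ)*(Q:ℤ) := by push_cast; ring
  have hblock : ∀ pp : ℕ, pp < Qm →
      ceilq (((pp:ℤ)+2)*(Pm:ℤ) - ((n'+1:ℕ):ℤ)*((m'+1:ℕ):ℤ)) (Qm:ℤ)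
        - ceilq (((pp:ℤ)+1)*(Pm:ℤ) - ((n'+1:ℕ):ℤ)*((m'+1:ℕ):ℤ)) (Qm:ℤ)
        = blk.getD pp 0 := by
    intro pp hpp
    rcases Nat.lt_or_ge pp ((n'+1)*Q) with h1 | h1
    · -- prefix region (slope P/Q)
      have hgd : blk.getD pp 0 = ceilq ((((pp % Q : ℕ):ℤ)+2)*(P:ℤ)) (Q:ℤ)
          - ceilq ((((pp % Q : ℕ):ℤ)+1)*(P:ℤ)) (Q:ℤ) := by
        rw [hblk2, getD_append_left _ _ _ (by
              rw [List.length_append, lW1, lW2]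
              exact Nat.lt_of_lt_of_le h1 (Nat.le_add_right _ _)),
            getD_append_left _ _ _ (by rw [lW1]; exact h1),
            wpow_getD _ _ _ (by rw [lwp]; exact h1), lwp,
            word01_getD _ _ _ (Nat.mod_lt pp hQ0), alpha01_ceilq]
        push_cast; ring
      rw [hgd]
      rcases Nat.lt_or_ge (pp+1) ((n'+1)*Q) with h2 | h2
      · -- interior
        have e1 : ceilq (((pp:ℤ)+2)*(Pm:ℤ) - ((n'+1:ℕ):ℤ)*((m'+1:ℕ):ℤ)) (Qm:ℤ)
            = ceilq (((pp:ℤ)+2)*(P:ℤ)) (Q:ℤ) := by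
          apply K1 _ (by positivity)
          have : pp+2 ≤ (n'+1)*Q := h2
          rw [← zNQ]; exact_mod_cast this
        have e2 : ceilq (((pp:ℤ)+1)*(Pm:ℤ) - ((n'+1:ℕ):ℤ)*((m'+1:ℕ):ℤ)) (Qm:ℤ)
            = ceilq (((pp:ℤ)+1)*(P:ℤ)) (Q:ℤ) := by
          apply K1 _ (by positivity)
          have : pp+1 ≤ (n'+1)*Q := le_of_lt h2
          rw [← zNQ]; exact_mod_cast this
        rw [e1, e2]
        have hsplit : (pp:ℤ) = ((pp % Q : ℕ):ℤ) + ((pp / Q : ℕ):ℤ)*(Q:ℤ) := by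
          have h : ((pp % Q : ℕ):ℤ) + ((Q:ℕ):ℤ)*((pp / Q : ℕ):ℤ) = (pp:ℤ) := by
            exact_mod_cast Nat.mod_add_div pp Q
          linarith
        rw [show ((pp:ℤ)+2)*(P:ℤ)
              = (((pp % Q : ℕ):ℤ)+2)*(P:ℤ) + (((pp / Q : ℕ):ℤ)*(P:ℤ))*(Q:ℤ) from by
            rw [hsplit]; ring,
          ceilq_add_mul _ _ _ zq,
          show ((pp:ℤ)+1)*(P:ℤ)
              = (((pp % Q : ℕ):ℤ)+1)*(P:ℤ) + (((pp / Q : ℕ):ℤ)*(P:ℤ))*(Q:ℤ) from by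
            rw [hsplit]; ring,
          ceilq_add_mul _ _ _ zq]
        ring
      · -- boundary pp+1 = (n'+1)*Q
        have hppq : pp + 1 = (n'+1)*Q := le_antisymm h1 h2
        have hz : (pp:ℤ) + 1 = ((n'+1:ℕ):ℤ)*(Q:ℤ) := by rw [← zNQ]; exact_mod_cast hppq
        have hmod : pp % Q = Q - 1 := by
          have h4 : pp = (Q-1) + n'*Q := by
            have h5 : pp + 1 = n'*Q + Q := by rw [hppq]; ring
            omega
          rw [h4, Nat.add_mul_mod_self_right, Nat.mod_eq_of_lt (by omega)]
        rw [hmod]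
        have hq1 : ((Q-1 : ℕ):ℤ) = (Q:ℤ)-1 := by omega
        have e2 : ceilq (((pp:ℤ)+1)*(Pm:ℤ) - ((n'+1:ℕ):ℤ)*((m'+1:ℕ):ℤ)) (Qm:ℤ)
            = ((n'+1:ℕ):ℤ)*(P:ℤ) := by
          rw [K1 ((pp:ℤ)+1) (by positivity) (le_of_eq hz),
            show ((pp:ℤ)+1)*(P:ℤ) = 0 + (((n'+1:ℕ):ℤ)*(P:ℤ))*(Q:ℤ) from by
              linear_combination (P:ℤ)*hz,
            ceilq_add_mul _ _ _ zq, ceilq0Q]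
          ring
        have e1 : ceilq (((pp:ℤ)+2)*(Pm:ℤ) - ((n'+1:ℕ):ℤ)*((m'+1:ℕ):ℤ)) (Qm:ℤ)
            = ((n'+1:ℕ):ℤ)*(P:ℤ) + 1 := by
          rw [show ((pp:ℤ)+2)*(Pm:ℤ) - ((n'+1:ℕ):ℤ)*((m'+1:ℕ):ℤ)
              = (((n'+1:ℕ):ℤ)*(Q:ℤ) + 0*(Tn:ℤ) + 1)*(Pm:ℤ) - ((n'+1:ℕ):ℤ)*((m'+1:ℕ):ℤ)
              from by linear_combination (Pm:ℤ)*hz,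
            K2 0 1 le_rfl (by push_cast; linarith) (by norm_num) (by exact_mod_cast hT),
            one_mul, ceilqST]
          ring
        rw [e1, e2, hq1,
          show ((Q:ℤ)-1+2)*(P:ℤ) = (P:ℤ) + (P:ℤ)*(Q:ℤ) from by ring,
          ceilq_add_mul _ _ _ zq, ceilqPQ,
          show ((Q:ℤ)-1+1)*(P:ℤ) = 0 + (P:ℤ)*(Q:ℤ) from by ring,
          ceilq_add_mul _ _ _ zq, ceilq0Q]
        ring
    · -- after the corner
      have hppi : pp = (n'+1)*Q + (pp - (n'+1)*Q) := (Nat.add_sub_cancel' h1).symm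
      set i := pp - (n'+1)*Q with hidef
      have hilt : i < m'*Tn + T := by
        rw [hQm'] at hpp
        have h5 : (n'+1)*Q + i < (n'+1)*Q + (m'*Tn + T) := by
          rw [← hppi]; linarith [hpp]
        exact Nat.lt_of_add_lt_add_left h5
      rcases Nat.lt_or_ge i (m'*Tn) with hia | hib
      · -- middle chunks
        set a0 := i / Tn with ha0def
        set t0 := i % Tn with ht0def
        have ha0 : a0 < m' := (Nat.div_lt_iff_lt_mul hTn0).mpr hia
        have hit : i = Tn*a0 + t0 := (Nat.div_add_mod i Tn).symm
        have ht0 : t0 < Tn := Nat.mod_lt _ hTn0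
        have hgd0 : blk.getD pp 0 = ((word01 ((S:ℚ)/(T:ℚ)) T) ++ wpow (word01 ((P:ℚ)/(Q:ℚ)) Q) n').getD t0 0 := by
          rw [hblk2, getD_append_left _ _ _ (by
                rw [List.length_append, lW1, lW2, hppi]
                exact Nat.add_lt_add_left hia _),
              getD_append_right _ _ _ (by rw [lW1]; exact h1), lW1, ← hidef,
              wpow_getD _ _ _ (by rw [lch]; exact hia), lch, ← ht0def]
        have hppz : (pp:ℤ) = ((n'+1:ℕ):ℤ)*(Q:ℤ) + ((a0:ℕ):ℤ)*(Tn:ℤ) + ((t0:ℕ):ℤ) := by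
          have h6 : pp = (n'+1)*Q + (Tn*a0 + t0) := by rw [hppi, ← hit]
          have h7 : (pp:ℤ) = (((n'+1)*Q : ℕ):ℤ) + ((Tn:ℤ)*(a0:ℤ) + ((t0:ℕ):ℤ)) := by
            exact_mod_cast h6
          rw [zNQ] at h7; linarith
        have za0 : (0:ℤ) ≤ ((a0:ℕ):ℤ) := by positivity
        have za2 : ((a0:ℕ):ℤ) ≤ ((m'+1:ℕ):ℤ) - 2 := by
          have : ((a0:ℕ):ℤ) < (m':ℕ) := by exact_mod_cast ha0
          push_cast at this ⊢; linarith
        have za1 : ((a0:ℕ):ℤ) ≤ ((m'+1:ℕ):ℤ) - 1 := by linarith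
        rcases Nat.lt_or_ge t0 T with htT | htT
        · -- inside a wS copy
          have hgd : blk.getD pp 0 = ceilq (((t0:ℤ)+2)*(S:ℤ)) (T:ℤ)
              - ceilq (((t0:ℤ)+1)*(S:ℤ)) (T:ℤ) := by
            rw [hgd0, getD_append_left _ _ _ (by rw [lws]; exact htT),
              word01_getD _ _ _ htT, alpha01_ceilq]
            push_cast; ring
          rw [hgd]
          have e2 : ceilq (((pp:ℤ)+1)*(Pm:ℤ) - ((n'+1:ℕ):ℤ)*((m'+1:ℕ):ℤ)) (Qm:ℤ)
              = ((n'+1:ℕ):ℤ)*(P:ℤ) + ((a0:ℕ):ℤ)*(Sn:ℤ) + ceilq (((t0:ℤ)+1)*(S:ℤ)) (T:ℤ) := by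
            rw [show ((pp:ℤ)+1)*(Pm:ℤ) - ((n'+1:ℕ):ℤ)*((m'+1:ℕ):ℤ)
                = (((n'+1:ℕ):ℤ)*(Q:ℤ) + ((a0:ℕ):ℤ)*(Tn:ℤ) + (((t0:ℕ):ℤ)+1))*(Pm:ℤ)
                  - ((n'+1:ℕ):ℤ)*((m'+1:ℕ):ℤ) from by linear_combination (Pm:ℤ)*hppz,
              K2 _ _ za0 za1 (by positivity) (by exact_mod_cast htT)]
          rcases Nat.lt_or_ge (t0+1) T with ht2 | ht2
          · -- interior of wS copy
            have e1 : ceilq (((pp:ℤ)+2)*(Pm:ℤ) - ((n'+1:ℕ):ℤ)*((m'+1:ℕ):ℤ)) (Qm:ℤ)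
                = ((n'+1:ℕ):ℤ)*(P:ℤ) + ((a0:ℕ):ℤ)*(Sn:ℤ) + ceilq (((t0:ℤ)+2)*(S:ℤ)) (T:ℤ) := by
              rw [show ((pp:ℤ)+2)*(Pm:ℤ) - ((n'+1:ℕ):ℤ)*((m'+1:ℕ):ℤ)
                  = (((n'+1:ℕ):ℤ)*(Q:ℤ) + ((a0:ℕ):ℤ)*(Tn:ℤ) + (((t0:ℕ):ℤ)+2))*(Pm:ℤ)
                    - ((n'+1:ℕ):ℤ)*((m'+1:ℕ):ℤ) from by linear_combination (Pm:ℤ)*hppz,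
                K2 _ _ za0 za1 (by positivity) (by exact_mod_cast ht2)]
            rw [e1, e2]; ring
          · -- end of wS copy : t0+1 = T
            have ht0T : t0 + 1 = T := le_antisymm htT ht2
            have zt0T : ((t0:ℕ):ℤ) + 1 = (T:ℤ) := by exact_mod_cast ht0T
            have hrhs : ceilq (((t0:ℤ)+2)*(S:ℤ)) (T:ℤ) - ceilq (((t0:ℤ)+1)*(S:ℤ)) (T:ℤ)
                = 1 := by
              rw [show ((t0:ℤ)+2)*(S:ℤ) = (S:ℤ) + (S:ℤ)*(T:ℤ) from by
                  linear_combination (S:ℤ)*zt0T,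
                ceilq_add_mul _ _ _ zt, ceilqST,
                show ((t0:ℤ)+1)*(S:ℤ) = 0 + (S:ℤ)*(T:ℤ) from by
                  linear_combination (S:ℤ)*zt0T,
                ceilq_add_mul _ _ _ zt, ceilq0T]
              ring
            rw [hrhs, e2, show ceilq (((t0:ℤ)+1)*(S:ℤ)) (T:ℤ) = (S:ℤ) from by
              rw [show ((t0:ℤ)+1)*(S:ℤ) = 0 + (S:ℤ)*(T:ℤ) from by
                  linear_combination (S:ℤ)*zt0T,
                ceilq_add_mul _ _ _ zt, ceilq0T]; ring]
            rcases Nat.eq_zero_or_pos n' with hn0 | hn0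
            · -- n = 1
              have zTnT : (Tn:ℤ) = (T:ℤ) := by rw [dtn]; push_cast [hn0]; ring
              have zSnS : (Sn:ℤ) = (S:ℤ) := by rw [dsn]; push_cast [hn0]; ring
              have e1 : ceilq (((pp:ℤ)+2)*(Pm:ℤ) - ((n'+1:ℕ):ℤ)*((m'+1:ℕ):ℤ)) (Qm:ℤ)
                  = ((n'+1:ℕ):ℤ)*(P:ℤ) + (((a0:ℕ):ℤ)+1)*(Sn:ℤ) + 1 := by
                rw [show ((pp:ℤ)+2)*(Pm:ℤ) - ((n'+1:ℕ):ℤ)*((m'+1:ℕ):ℤ)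
                    = (((n'+1:ℕ):ℤ)*(Q:ℤ) + (((a0:ℕ):ℤ)+1)*(Tn:ℤ) + 1)*(Pm:ℤ)
                      - ((n'+1:ℕ):ℤ)*((m'+1:ℕ):ℤ) from by
                    linear_combination (Pm:ℤ)*hppz + (Pm:ℤ)*zt0T - (Pm:ℤ)*zTnT,
                  K2 _ _ (by linarith) (by push_cast; push_cast at za2; linarith)
                    (by norm_num) (by exact_mod_cast hT),
                  one_mul, ceilqST]
              rw [e1]; linarith [zSnS]
            · -- n ≥ 2
              have e1 : ceilq (((pp:ℤ)+2)*(Pm:ℤ) - ((n'+1:ℕ):ℤ)*((m'+1:ℕ):ℤ)) (Qm:ℤ)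
                  = ((n'+1:ℕ):ℤ)*(P:ℤ) + ((a0:ℕ):ℤ)*(Sn:ℤ) + (S:ℤ) + 1 := by
                rw [show ((pp:ℤ)+2)*(Pm:ℤ) - ((n'+1:ℕ):ℤ)*((m'+1:ℕ):ℤ)
                    = (((n'+1:ℕ):ℤ)*(Q:ℤ) + ((a0:ℕ):ℤ)*(Tn:ℤ) + (T:ℤ) + 1)*(Pm:ℤ)
                      - ((n'+1:ℕ):ℤ)*((m'+1:ℕ):ℤ) from by
                    linear_combination (Pm:ℤ)*hppz + (Pm:ℤ)*zt0T,
                  K3 _ _ za0 za2 (by norm_num) (by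
                    push_cast
                    have h9 : (1:ℤ) ≤ (n':ℕ) := by exact_mod_cast hn0
                    have h10 := one_le_mul_int _ _ h9 (by linarith : (1:ℤ) ≤ (Q:ℤ))
                    linarith),
                  one_mul, ceilqPQ]
              rw [e1]; ring
        · -- inside a wP^(n-1) tail
          set c0 := t0 - T with hc0def
          have hc0i : t0 = T + c0 := (Nat.add_sub_cancel' htT).symm
          have hc0lt : c0 < n'*Q := by
            have h8 : T + c0 < Tn := by rw [← hc0i]; exact ht0
            rw [hTn] at h8; omega
          have hgd : blk.getD pp 0 = ceilq ((((c0 % Q : ℕ):ℤ)+2)*(P:ℤ)) (Q:ℤ)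
              - ceilq ((((c0 % Q : ℕ):ℤ)+1)*(P:ℤ)) (Q:ℤ) := by
            rw [hgd0, getD_append_right _ _ _ (by rw [lws]; exact htT), lws, ← hc0def,
              wpow_getD _ _ _ (by rw [lwp]; exact hc0lt), lwp,
              word01_getD _ _ _ (Nat.mod_lt c0 hQ0), alpha01_ceilq]
            push_cast; ring
          rw [hgd]
          have zc0 : ((t0:ℕ):ℤ) = (T:ℤ) + ((c0:ℕ):ℤ) := by exact_mod_cast hc0i
          have e2 : ceilq (((pp:ℤ)+1)*(Pm:ℤ) - ((n'+1:ℕ):ℤ)*((m'+1:ℕ):ℤ)) (Qm:ℤ)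
              = ((n'+1:ℕ):ℤ)*(P:ℤ) + ((a0:ℕ):ℤ)*(Sn:ℤ) + (S:ℤ)
                + ceilq ((((c0:ℕ):ℤ)+1)*(P:ℤ)) (Q:ℤ) := by
            rw [show ((pp:ℤ)+1)*(Pm:ℤ) - ((n'+1:ℕ):ℤ)*((m'+1:ℕ):ℤ)
                = (((n'+1:ℕ):ℤ)*(Q:ℤ) + ((a0:ℕ):ℤ)*(Tn:ℤ) + (T:ℤ) + (((c0:ℕ):ℤ)+1))*(Pm:ℤ)
                  - ((n'+1:ℕ):ℤ)*((m'+1:ℕ):ℤ) from by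
                linear_combination (Pm:ℤ)*hppz + (Pm:ℤ)*zc0,
              K3 _ _ za0 za2 (by positivity) (by
                have h9 : (c0:ℤ)+1 ≤ ((n':ℕ):ℤ)*(Q:ℤ) := by exact_mod_cast hc0lt
                push_cast
                linarith)]
          rcases Nat.lt_or_ge (c0+1) (n'*Q) with hc2 | hc2
          · -- interior of the tail
            have e1 : ceilq (((pp:ℤ)+2)*(Pm:ℤ) - ((n'+1:ℕ):ℤ)*((m'+1:ℕ):ℤ)) (Qm:ℤ)
                = ((n'+1:ℕ):ℤ)*(P:ℤ) + ((a0:ℕ):ℤ)*(Sn:ℤ) + (S:ℤ)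
                  + ceilq ((((c0:ℕ):ℤ)+2)*(P:ℤ)) (Q:ℤ) := by
              rw [show ((pp:ℤ)+2)*(Pm:ℤ) - ((n'+1:ℕ):ℤ)*((m'+1:ℕ):ℤ)
                  = (((n'+1:ℕ):ℤ)*(Q:ℤ) + ((a0:ℕ):ℤ)*(Tn:ℤ) + (T:ℤ) + (((c0:ℕ):ℤ)+2))*(Pm:ℤ)
                    - ((n'+1:ℕ):ℤ)*((m'+1:ℕ):ℤ) from by
                  linear_combination (Pm:ℤ)*hppz + (Pm:ℤ)*zc0,
                K3 _ _ za0 za2 (by positivity) (by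
                  have h9 : (c0:ℤ)+2 ≤ ((n':ℕ):ℤ)*(Q:ℤ) := by exact_mod_cast hc2
                  push_cast
                  linarith)]
            rw [e1, e2]
            have hsplit : ((c0:ℕ):ℤ) = ((c0 % Q : ℕ):ℤ) + ((c0 / Q : ℕ):ℤ)*(Q:ℤ) := by
              have h : ((c0 % Q : ℕ):ℤ) + ((Q:ℕ):ℤ)*((c0 / Q : ℕ):ℤ) = (c0:ℤ) := by
                exact_mod_cast Nat.mod_add_div c0 Q
              linarith
            rw [show (((c0:ℕ):ℤ)+2)*(P:ℤ)
                  = (((c0 % Q : ℕ):ℤ)+2)*(P:ℤ) + (((c0 / Q : ℕ):ℤ)*(P:ℤ))*(Q:ℤ) from by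
                rw [hsplit]; ring,
              ceilq_add_mul _ _ _ zq,
              show (((c0:ℕ):ℤ)+1)*(P:ℤ)
                  = (((c0 % Q : ℕ):ℤ)+1)*(P:ℤ) + (((c0 / Q : ℕ):ℤ)*(P:ℤ))*(Q:ℤ) from by
                rw [hsplit]; ring,
              ceilq_add_mul _ _ _ zq]
            ring
          · -- end of the tail : c0+1 = n'*Q
            have hc0q : c0 + 1 = n'*Q := le_antisymm hc0lt hc2
            have zc0q : ((c0:ℕ):ℤ) + 1 = ((n':ℕ):ℤ)*(Q:ℤ) := by exact_mod_cast hc0q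
            have hn0 : 0 < n' := by
              rcases Nat.eq_zero_or_pos n' with h | h
              · rw [h] at hc0q; omega
              · exact h
            have hmod : c0 % Q = Q - 1 := by
              have h4 : c0 = (Q-1) + (n'-1)*Q := by
                have h5 : c0 + 1 = (n'-1)*Q + Q := by
                  rw [hc0q]
                  obtain ⟨k, hk⟩ : ∃ k, n' = k+1 := ⟨n'-1, by omega⟩
                  subst hk
                  simp [Nat.add_sub_cancel]
                  ring
                omega
              rw [h4, Nat.add_mul_mod_self_right, Nat.mod_eq_of_lt (by omega)]
            rw [hmod]
            have hq1 : ((Q-1 : ℕ):ℤ) = (Q:ℤ)-1 := by omega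
            have e1 : ceilq (((pp:ℤ)+2)*(Pm:ℤ) - ((n'+1:ℕ):ℤ)*((m'+1:ℕ):ℤ)) (Qm:ℤ)
                = ((n'+1:ℕ):ℤ)*(P:ℤ) + (((a0:ℕ):ℤ)+1)*(Sn:ℤ) + 1 := by
              rw [show ((pp:ℤ)+2)*(Pm:ℤ) - ((n'+1:ℕ):ℤ)*((m'+1:ℕ):ℤ)
                  = (((n'+1:ℕ):ℤ)*(Q:ℤ) + (((a0:ℕ):ℤ)+1)*(Tn:ℤ) + 1)*(Pm:ℤ)
                    - ((n'+1:ℕ):ℤ)*((m'+1:ℕ):ℤ) from by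
                  have dtn' := dtn
                  have hppz' := hppz
                  push_cast at dtn' hppz' ⊢
                  linear_combination (Pm:ℤ)*hppz' + (Pm:ℤ)*zc0 + (Pm:ℤ)*zc0q - (Pm:ℤ)*dtn',
                K2 _ _ (by linarith) (by push_cast; push_cast at za2; linarith)
                  (by norm_num) (by exact_mod_cast hT),
                one_mul, ceilqST]
            have hc0P : ceilq ((((c0:ℕ):ℤ)+1)*(P:ℤ)) (Q:ℤ) = ((n':ℕ):ℤ)*(P:ℤ) := by
              rw [show (((c0:ℕ):ℤ)+1)*(P:ℤ) = 0 + (((n':ℕ):ℤ)*(P:ℤ))*(Q:ℤ) from by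
                  linear_combination (P:ℤ)*zc0q,
                ceilq_add_mul _ _ _ zq, ceilq0Q]
              ring
            rw [e1, e2, hc0P, hq1,
              show ((Q:ℤ)-1+2)*(P:ℤ) = (P:ℤ) + (P:ℤ)*(Q:ℤ) from by ring,
              ceilq_add_mul _ _ _ zq, ceilqPQ,
              show ((Q:ℤ)-1+1)*(P:ℤ) = 0 + (P:ℤ)*(Q:ℤ) from by ring,
              ceilq_add_mul _ _ _ zq, ceilq0Q]
            rw [dsn]
            push_cast
            ring
      · -- final wS
        set t0 := i - m'*Tn with ht0def
        have hit : i = m'*Tn + t0 := (Nat.add_sub_cancel' hib).symm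
        have htT : t0 < T := by
          rw [hit] at hilt
          exact Nat.lt_of_add_lt_add_left hilt
        have hgd : blk.getD pp 0 = ceilq (((t0:ℤ)+2)*(S:ℤ)) (T:ℤ)
            - ceilq (((t0:ℤ)+1)*(S:ℤ)) (T:ℤ) := by
          rw [hblk2, getD_append_right _ _ _ (by
                rw [List.length_append, lW1, lW2, hppi, hit]
                rw [show (n'+1)*Q + (m'*Tn + t0) = ((n'+1)*Q + m'*Tn) + t0 from by ring]
                exact Nat.le_add_right _ _),
            List.length_append, lW1, lW2,
            show pp - ((n'+1)*Q + m'*Tn) = t0 from by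
              rw [hppi, hit, show (n'+1)*Q + (m'*Tn + t0) = ((n'+1)*Q + m'*Tn) + t0 from by ring,
                Nat.add_sub_cancel_left],
            word01_getD _ _ _ htT, alpha01_ceilq]
          push_cast; ring
        rw [hgd]
        have hppz : (pp:ℤ) = ((n'+1:ℕ):ℤ)*(Q:ℤ) + ((m':ℕ):ℤ)*(Tn:ℤ) + ((t0:ℕ):ℤ) := by
          have h6 : pp = (n'+1)*Q + (m'*Tn + t0) := by rw [hppi, ← hit]
          have h7 : (pp:ℤ) = (((n'+1)*Q : ℕ):ℤ) + (((m':ℕ):ℤ)*(Tn:ℤ) + ((t0:ℕ):ℤ)) := by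
            exact_mod_cast h6
          rw [zNQ] at h7; linarith
        have zm' : (0:ℤ) ≤ ((m':ℕ):ℤ) := by positivity
        have zm1 : ((m':ℕ):ℤ) ≤ ((m'+1:ℕ):ℤ) - 1 := by push_cast; linarith
        have e2 : ceilq (((pp:ℤ)+1)*(Pm:ℤ) - ((n'+1:ℕ):ℤ)*((m'+1:ℕ):ℤ)) (Qm:ℤ)
            = ((n'+1:ℕ):ℤ)*(P:ℤ) + ((m':ℕ):ℤ)*(Sn:ℤ) + ceilq (((t0:ℤ)+1)*(S:ℤ)) (T:ℤ) := by
          rw [show ((pp:ℤ)+1)*(Pm:ℤ) - ((n'+1:ℕ):ℤ)*((m'+1:ℕ):ℤ)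
              = (((n'+1:ℕ):ℤ)*(Q:ℤ) + ((m':ℕ):ℤ)*(Tn:ℤ) + (((t0:ℕ):ℤ)+1))*(Pm:ℤ)
                - ((n'+1:ℕ):ℤ)*((m'+1:ℕ):ℤ) from by linear_combination (Pm:ℤ)*hppz,
            K2 _ _ zm' zm1 (by positivity) (by exact_mod_cast htT)]
        rcases Nat.lt_or_ge (t0+1) T with ht2 | ht2
        · have e1 : ceilq (((pp:ℤ)+2)*(Pm:ℤ) - ((n'+1:ℕ):ℤ)*((m'+1:ℕ):ℤ)) (Qm:ℤ)
              = ((n'+1:ℕ):ℤ)*(P:ℤ) + ((m':ℕ):ℤ)*(Sn:ℤ) + ceilq (((t0:ℤ)+2)*(S:ℤ)) (T:ℤ) := by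
            rw [show ((pp:ℤ)+2)*(Pm:ℤ) - ((n'+1:ℕ):ℤ)*((m'+1:ℕ):ℤ)
                = (((n'+1:ℕ):ℤ)*(Q:ℤ) + ((m':ℕ):ℤ)*(Tn:ℤ) + (((t0:ℕ):ℤ)+2))*(Pm:ℤ)
                  - ((n'+1:ℕ):ℤ)*((m'+1:ℕ):ℤ) from by linear_combination (Pm:ℤ)*hppz,
              K2 _ _ zm' zm1 (by positivity) (by exact_mod_cast ht2)]
          rw [e1, e2]; ring
        · -- the very end of the period
          have ht0T : t0 + 1 = T := le_antisymm htT ht2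
          have zt0T : ((t0:ℕ):ℤ) + 1 = (T:ℤ) := by exact_mod_cast ht0T
          have hrhs : ceilq (((t0:ℤ)+2)*(S:ℤ)) (T:ℤ) - ceilq (((t0:ℤ)+1)*(S:ℤ)) (T:ℤ)
              = 1 := by
            rw [show ((t0:ℤ)+2)*(S:ℤ) = (S:ℤ) + (S:ℤ)*(T:ℤ) from by
                linear_combination (S:ℤ)*zt0T,
              ceilq_add_mul _ _ _ zt, ceilqST,
              show ((t0:ℤ)+1)*(S:ℤ) = 0 + (S:ℤ)*(T:ℤ) from by
                linear_combination (S:ℤ)*zt0T,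
              ceilq_add_mul _ _ _ zt, ceilq0T]
            ring
          rw [hrhs, e2, show ceilq (((t0:ℤ)+1)*(S:ℤ)) (T:ℤ) = (S:ℤ) from by
            rw [show ((t0:ℤ)+1)*(S:ℤ) = 0 + (S:ℤ)*(T:ℤ) from by
                linear_combination (S:ℤ)*zt0T,
              ceilq_add_mul _ _ _ zt, ceilq0T]; ring]
          have hppQmz : (pp:ℤ) + 1 = (Qm:ℤ) := by
            have hz1 : (Qm:ℤ) = (((n'+1)*Q : ℕ):ℤ) + ((m':ℕ):ℤ)*(Tn:ℤ) + (T:ℤ) := by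
              exact_mod_cast hQm'
            rw [zNQ] at hz1
            linarith [hppz, zt0T]
          have e1 : ceilq (((pp:ℤ)+2)*(Pm:ℤ) - ((n'+1:ℕ):ℤ)*((m'+1:ℕ):ℤ)) (Qm:ℤ)
              = 1 + (Pm:ℤ) := by
            rw [show ((pp:ℤ)+2)*(Pm:ℤ) - ((n'+1:ℕ):ℤ)*((m'+1:ℕ):ℤ)
                = ((1:ℤ)+(Qm:ℤ))*(Pm:ℤ) - ((n'+1:ℕ):ℤ)*((m'+1:ℕ):ℤ) from by
                linear_combination (Pm:ℤ)*hppQmz,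
              Hper 1,
              K1 1 (by norm_num) (by linarith [one_le_mul_int _ _ zn (by linarith : (1:ℤ) ≤ (Q:ℤ))]), one_mul, ceilqPQ]
          rw [e1]
          rw [dpm, dsn]
          push_cast
          ring
  -- iterated periodicity
  have Hperk : ∀ (dd : ℕ) (x : ℤ),
      ceilq ((x + (dd:ℤ)*(Qm:ℤ))*(Pm:ℤ) - ((n'+1:ℕ):ℤ)*((m'+1:ℕ):ℤ)) (Qm:ℤ)
      = ceilq (x*(Pm:ℤ) - ((n'+1:ℕ):ℤ)*((m'+1:ℕ):ℤ)) (Qm:ℤ) + (dd:ℤ)*(Pm:ℤ) := by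
    intro dd
    induction dd with
    | zero => intro x; norm_num
    | succ kk ih =>
      intro x
      have h1 : x + ((kk+1:ℕ):ℤ)*(Qm:ℤ) = (x + (kk:ℤ)*(Qm:ℤ)) + (Qm:ℤ) := by push_cast; ring
      rw [h1, Hper, ih]
      push_cast; ring
  -- final assembly
  intro j hj
  rw [hgam j, hlen]
  set d := (j-1)/Qm with hd
  set pp := (j-1) % Qm with hpp
  have hmodlt : pp < Qm := Nat.mod_lt _ hQmpos
  have hsplit : j - 1 = Qm*d + pp := (Nat.div_add_mod _ _).symm
  have hj1 : j = (j-1) + 1 := by omega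
  have hj' : j = Qm*d + pp + 1 := by
    conv_lhs => rw [hj1, hsplit]
  have hjz : (j:ℤ) = ((pp:ℤ)+1) + (d:ℤ)*(Qm:ℤ) := by
    have h2 := hj'
    zify at h2
    linarith
  rw [show ((j:ℤ))*(Pm:ℤ) - ((n'+1:ℕ):ℤ)*((m'+1:ℕ):ℤ)
        = ((((pp:ℤ)+1)) + (d:ℤ)*(Qm:ℤ))*(Pm:ℤ) - ((n'+1:ℕ):ℤ)*((m'+1:ℕ):ℤ) from by
      linear_combination (Pm:ℤ)*hjz,
    show ((j:ℤ)+1)*(Pm:ℤ) - ((n'+1:ℕ):ℤ)*((m'+1:ℕ):ℤ)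
        = ((((pp:ℤ)+2)) + (d:ℤ)*(Qm:ℤ))*(Pm:ℤ) - ((n'+1:ℕ):ℤ)*((m'+1:ℕ):ℤ) from by
      linear_combination (Pm:ℤ)*hjz,
    Hperk d ((pp:ℤ)+1), Hperk d ((pp:ℤ)+2)]
  have hb := hblock pp hmodlt
  linarith [hb]
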